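/- Suppose G is a SISO LTI system whose zero-initial-condition length-L' behavior is y = T_{L'}(g) u, and the controller K acts as u = T_{L'}(a) e in the standard feedback loop e = r - z, z = T_{L'}(g) u, with 1 + g_0 a_0 ≠ 0. Then for any plant trajectory (û, ŷ) of length L' with zero initial condition, the pair (r, z) defined by r = û + T_{L'}(a) ŷ and z = T_{L'}(a) ŷ is a closed-loop trajectory from reference to output with zero initial conditions; conversely every zero-initial-condition closed-loop trajectory (r, z) arises this way from some plant trajectory. -/
import Mathlib


/-- Lower-triangular Toeplitz matrix of a sequence `a` of length `L`. -/
def toep (L : ℕ) (a : Fin L → ℝ) : Matrix (Fin L) (Fin L) ℝ :=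
  Matrix.of fun i j =>
    if _ : (j : ℕ) ≤ (i : ℕ) then
      a ⟨(i : ℕ) - (j : ℕ), Nat.lt_of_le_of_lt (Nat.sub_le _ _) i.isLt⟩
    else 0

/-- The lower shift matrix. -/
def shiftM (L : ℕ) : Matrix (Fin L) (Fin L) ℝ :=
  Matrix.of fun i j => if (j : ℕ) + 1 = (i : ℕ) then 1 else 0

lemma shiftM_pow (L d : ℕ) (i j : Fin L) :
    ((shiftM L) ^ d) i j = if (j : ℕ) + d = (i : ℕ) then 1 else 0 := by
  induction d generalizing i j with
  | zero =>
    simp [Matrix.one_apply, Fin.ext_iff, eq_comm]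
  | succ d ih =>
    rw [pow_succ, Matrix.mul_apply]
    by_cases hjL : (j : ℕ) + 1 < L
    · rw [Finset.sum_eq_single (⟨(j : ℕ) + 1, hjL⟩ : Fin L)]
      · have h1 : shiftM L ⟨(j:ℕ)+1, hjL⟩ j = 1 := by simp [shiftM]
        rw [h1, mul_one, ih]
        have he : ((j:ℕ)+1+d = (i:ℕ)) ↔ ((j:ℕ)+(d+1) = (i:ℕ)) := by omega
        simpa using if_congr he rfl rfl
      · intro b _ hb
        have : ¬ ((j : ℕ) + 1 = (b : ℕ)) := by
          intro hc; apply hb; exact Fin.ext hc.symm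
        simp [shiftM, Matrix.of_apply, this]
      · simp
    · have h1 : ∀ k : Fin L, shiftM L k j = 0 := by
        intro k
        have : ¬ ((j : ℕ) + 1 = (k : ℕ)) := by
          have := k.isLt; omega
        simp [shiftM, Matrix.of_apply, this]
      have h2 : ¬ ((j : ℕ) + (d + 1) = (i : ℕ)) := by
        have := i.isLt; omega
      simp [h1, h2]

lemma toep_eq_sum (L : ℕ) (a : Fin L → ℝ) :
    toep L a = ∑ d : Fin L, a d • (shiftM L) ^ (d : ℕ) := by
  ext i j
  rw [Matrix.sum_apply]
  simp only [Matrix.smul_apply, shiftM_pow, smul_eq_mul]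
  by_cases hij : (j : ℕ) ≤ (i : ℕ)
  · have hd : ((i : ℕ) - (j : ℕ)) < L := Nat.lt_of_le_of_lt (Nat.sub_le _ _) i.isLt
    rw [Finset.sum_eq_single (⟨(i : ℕ) - (j : ℕ), hd⟩ : Fin L)]
    · simp [toep, Matrix.of_apply, hij]
      omega
    · intro b _ hb
      have : ¬ ((j : ℕ) + (b : ℕ) = (i : ℕ)) := by
        intro hc; apply hb; apply Fin.ext; simp; omega
      simp [this]
    · simp
  · have : ∀ b : Fin L, (a b * if (j : ℕ) + (b : ℕ) = (i : ℕ) then 1 else 0) = 0 := by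
      intro b
      have : ¬ ((j : ℕ) + (b : ℕ) = (i : ℕ)) := by omega
      simp [this]
    simp only [toep, Matrix.of_apply]
    rw [dif_neg hij]
    exact (Finset.sum_eq_zero fun b _ => this b).symm

lemma toep_comm (L : ℕ) (g a : Fin L → ℝ) :
    toep L g * toep L a = toep L a * toep L g := by
  rw [toep_eq_sum, toep_eq_sum, Finset.sum_mul_sum, Finset.sum_mul_sum]
  rw [Finset.sum_comm]
  refine Finset.sum_congr rfl fun d _ => Finset.sum_congr rfl fun e _ => ?_
  rw [Matrix.smul_mul, Matrix.mul_smul, Matrix.smul_mul, Matrix.mul_smul,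
    ← pow_add, ← pow_add, Nat.add_comm]
  rw [smul_comm]

/-- Parametrization of all zero-initial-condition closed-loop trajectories `(r, z)`
of the well-posed feedback loop with plant `T(g)` and controller `T(a)`:
every plant trajectory `(û, ŷ)` (i.e. `ŷ = T(g) û`) yields the closed-loop trajectory
`r = û + T(a) ŷ`, `z = T(a) ŷ`, and conversely every zero-initial-condition
closed-loop trajectory arises this way. -/
theorem stmt12 (L' : ℕ) (hL : 0 < L') (g a : Fin L' → ℝ)
    (h : 1 + g ⟨0, hL⟩ * a ⟨0, hL⟩ ≠ 0) :
    (∀ uh yh : Fin L' → ℝ, yh = (toep L' g).mulVec uh →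
      (toep L' a).mulVec yh =
        (toep L' g * toep L' a).mulVec
          ((uh + (toep L' a).mulVec yh) - (toep L' a).mulVec yh)) ∧
    (∀ r z : Fin L' → ℝ, z = (toep L' g * toep L' a).mulVec (r - z) →
      ∃ uh yh : Fin L' → ℝ, yh = (toep L' g).mulVec uh ∧
        r = uh + (toep L' a).mulVec yh ∧ z = (toep L' a).mulVec yh) := by
  constructor
  · intro uh yh hy
    have huh : (uh + (toep L' a).mulVec yh) - (toep L' a).mulVec yh = uh := by
      funext i; simp
    rw [huh, hy, Matrix.mulVec_mulVec, toep_comm L' a g]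
  · intro r z hz
    refine ⟨r - z, (toep L' g).mulVec (r - z), rfl, ?_, ?_⟩
    · have hz' : (toep L' a).mulVec ((toep L' g).mulVec (r - z)) = z := by
        rw [Matrix.mulVec_mulVec, ← toep_comm, ← hz]
      rw [hz']; funext i; simp
    · rw [Matrix.mulVec_mulVec, ← toep_comm, ← hz]
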